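/- Let m, n ≥ 1, let γ, τ > 0, δ ∈ (0, 1], and η := √(τ+γ) with η ≤ 1. Let A be a random matrix over F₂^{m×n} and let B be a bad-set assignment for A. Let S be any value attained by B(A) with positive probability (so S is either a subset of {1, …, m} of size at most η·m, or the symbol ⊥), and set ε_bad(S) := Pr[A is (τ,δ)-bad with respect to B | B(A) = S]. Then the conditional distribution of A given B(A) = S is ε_bad(S)-close to an (η, n·(1−η) − log₂(1/δ))-block source. -/

import Mathlib

open Finset

open Classical in
/-- Probability of an event for a random matrix over `F₂` with mass function `μ`. -/
noncomputable def prEvt {m n : ℕ} (μ : Matrix (Fin m) (Fin n) (ZMod 2) → ℝ)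
    (E : Matrix (Fin m) (Fin n) (ZMod 2) → Prop) : ℝ :=
  ∑ A, if E A then μ A else 0

/-- `rowsAgree i A B` says that the first `i` rows of `A` and `B` coincide. -/
def rowsAgree {m n : ℕ} (i : ℕ) (A B : Matrix (Fin m) (Fin n) (ZMod 2)) : Prop :=
  ∀ j : Fin m, (j : ℕ) < i → A j = B j

/-- `pIdx μ i A₀` is the conditional probability that row `i` of a `μ`-random matrix equals
row `i` of `A₀`, given that the previous rows agree with those of `A₀`. -/
noncomputable def pIdx {m n : ℕ} (μ : Matrix (Fin m) (Fin n) (ZMod 2) → ℝ)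
    (i : Fin m) (A₀ : Matrix (Fin m) (Fin n) (ZMod 2)) : ℝ :=
  prEvt μ (fun B => B i = A₀ i ∧ rowsAgree (i : ℕ) B A₀)
    / prEvt μ (fun B => rowsAgree (i : ℕ) B A₀)

/-- `qIdx μ i A₀ = -log₂ (pIdx μ i A₀)`. -/
noncomputable def qIdx {m n : ℕ} (μ : Matrix (Fin m) (Fin n) (ZMod 2) → ℝ)
    (i : Fin m) (A₀ : Matrix (Fin m) (Fin n) (ZMod 2)) : ℝ :=
  -Real.logb 2 (pIdx μ i A₀)

/-- `A₀` is `τ`-rare if some conditional row probability is below `2 ^ (-n (1 + τ))`. -/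
def tauRare {m n : ℕ} (μ : Matrix (Fin m) (Fin n) (ZMod 2) → ℝ) (τ : ℝ)
    (A₀ : Matrix (Fin m) (Fin n) (ZMod 2)) : Prop :=
  ∃ i : Fin m, pIdx μ i A₀ < (2 : ℝ) ^ (-((n : ℝ) * (1 + τ)))

/-- A bad-set assignment for the random matrix distributed according to `μ`: every `τ`-rare
matrix in the support is mapped to `⊥` (here `none`) and every non-`τ`-rare matrix in the
support is mapped to a set of at most `√(τ+γ)·m` rows outside of which the conditional
surprise `qᵢ` is at least `(1 - √(τ+γ))·n`. -/
def IsBadSetAssignment {m n : ℕ} (μ : Matrix (Fin m) (Fin n) (ZMod 2) → ℝ) (τ γ : ℝ)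
    (B : Matrix (Fin m) (Fin n) (ZMod 2) → Option (Finset (Fin m))) : Prop :=
  ∀ A₀, 0 < μ A₀ →
    (tauRare μ τ A₀ → B A₀ = none) ∧
    (¬ tauRare μ τ A₀ → ∃ S : Finset (Fin m), B A₀ = some S ∧
      (S.card : ℝ) ≤ Real.sqrt (τ + γ) * (m : ℝ) ∧
      ∀ i : Fin m, i ∉ S → (1 - Real.sqrt (τ + γ)) * (n : ℝ) ≤ qIdx μ i A₀)

/-- `A₀` is `(τ,δ)`-bad with respect to the bad-set assignment `B`: either `A₀` is `τ`-rare,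
or for some `i` the conditional probability that `B` of the random matrix equals `B A₀`, given
that the first `i` rows agree with `A₀`, is below `δ`. -/
def IsTauDeltaBad {m n : ℕ} (μ : Matrix (Fin m) (Fin n) (ZMod 2) → ℝ) (τ δ : ℝ)
    (B : Matrix (Fin m) (Fin n) (ZMod 2) → Option (Finset (Fin m)))
    (A₀ : Matrix (Fin m) (Fin n) (ZMod 2)) : Prop :=
  tauRare μ τ A₀ ∨ ∃ i : Fin m,
    prEvt μ (fun C => B C = B A₀ ∧ rowsAgree (i : ℕ) C A₀)
      / prEvt μ (fun C => rowsAgree (i : ℕ) C A₀) < δ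

/-- `ν` (a distribution on `F₂^{m×n}`) is an `(η, n')`-block source: there is a set `S` of at
most `η·m` rows such that for every matrix in the support and every row `i ∉ S`, every value of
row `i` has conditional probability at most `2^{-n'}` given the previous rows. -/
def IsBlockSource {m n : ℕ} (ν : Matrix (Fin m) (Fin n) (ZMod 2) → ℝ) (η n' : ℝ) : Prop :=
  ∃ S : Finset (Fin m), (S.card : ℝ) ≤ η * (m : ℝ) ∧
    ∀ A₀, 0 < ν A₀ → ∀ i : Fin m, i ∉ S → ∀ w : Fin n → ZMod 2,
      prEvt ν (fun C => C i = w ∧ rowsAgree (i : ℕ) C A₀)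
        / prEvt ν (fun C => rowsAgree (i : ℕ) C A₀) ≤ (2 : ℝ) ^ (-n')

-- ### auxiliary lemmas

section AuxLemmas
variable {m n : ℕ}

local notation "Mx" => Matrix (Fin m) (Fin n) (ZMod 2)

lemma prEvt_nonneg (μ : Mx → ℝ) (h : ∀ A, 0 ≤ μ A) (E : Mx → Prop) : 0 ≤ prEvt μ E := by
  classical
  refine Finset.sum_nonneg fun A _ => ?_
  split <;> simp [h A]

lemma prEvt_congr (μ : Mx → ℝ) {E F : Mx → Prop} (h : ∀ A, E A ↔ F A) :
    prEvt μ E = prEvt μ F := by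
  classical
  exact Finset.sum_congr rfl fun A _ => if_congr (h A) rfl rfl

lemma prEvt_mono (μ : Mx → ℝ) (h0 : ∀ A, 0 ≤ μ A) {E F : Mx → Prop}
    (h : ∀ A, E A → F A) : prEvt μ E ≤ prEvt μ F := by
  classical
  refine Finset.sum_le_sum fun A _ => ?_
  by_cases hA : E A
  · rw [if_pos hA, if_pos (h A hA)]
  · rw [if_neg hA]; split <;> simp [h0 A]

lemma prEvt_le_prEvt (μ₁ μ₂ : Mx → ℝ) (h : ∀ A, μ₁ A ≤ μ₂ A) (h0 : ∀ A, 0 ≤ μ₂ A)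
    (E : Mx → Prop) : prEvt μ₁ E ≤ prEvt μ₂ E := by
  classical
  refine Finset.sum_le_sum fun A _ => ?_
  split <;> simp [h A, h0 A]

lemma single_le_prEvt (μ : Mx → ℝ) (h0 : ∀ A, 0 ≤ μ A) {E : Mx → Prop} {A₀ : Mx}
    (hE : E A₀) : μ A₀ ≤ prEvt μ E := by
  classical
  unfold prEvt
  calc μ A₀ = (if E A₀ then μ A₀ else 0) := (if_pos hE).symm
    _ ≤ ∑ A : Mx, if E A then μ A else 0 :=
        Finset.single_le_sum (f := fun A : Mx => if E A then μ A else 0)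
          (fun A _ => by split <;> simp [h0 A]) (Finset.mem_univ A₀)

lemma rowsAgree_zero (A B : Mx) : rowsAgree 0 A B := fun j hj => absurd hj (Nat.not_lt_zero _)

lemma rowsAgree_top_iff (A B : Mx) : rowsAgree m A B ↔ A = B :=
  ⟨fun h => funext fun j => h j j.isLt, fun h j _ => by rw [h]⟩

lemma rowsAgree_succ_update (i : Fin m) (w : Fin n → ZMod 2) (C A₀ : Mx) :
    (C i = w ∧ rowsAgree (i : ℕ) C A₀) ↔ rowsAgree ((i : ℕ) + 1) C (Function.update A₀ i w) := by
  constructor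
  · rintro ⟨hw, hag⟩ j hj
    rcases Nat.lt_succ_iff_lt_or_eq.1 hj with hj' | hj'
    · exact (hag j hj').trans (Function.update_of_ne (by exact fun hji => by simp [hji] at hj') _ _).symm
    · have : j = i := Fin.ext hj'
      subst this
      exact hw.trans (Function.update_self j w A₀).symm
  · intro h
    have hji : C i = w := by
      have := h i (Nat.lt_succ_self _)
      exact this.trans (Function.update_self _ _ _)
    refine ⟨hji, fun j hj => ?_⟩
    have hne : j ≠ i := fun hji' => by simp [hji'] at hj
    have := h j (Nat.lt_succ_of_lt hj)
    exact this.trans (Function.update_of_ne hne _ _)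

lemma rowsAgree_succ (i : Fin m) (C A₀ : Mx) :
    (C i = A₀ i ∧ rowsAgree (i : ℕ) C A₀) ↔ rowsAgree ((i : ℕ) + 1) C A₀ := by
  have h := rowsAgree_succ_update i (A₀ i) C A₀
  have e : Function.update A₀ i (A₀ i) = A₀ := Function.update_eq_self _ _
  rwa [e] at h

lemma rowsAgree_congr_right {k : ℕ} {D A₀ : Mx} (h : ∀ j : Fin m, (j : ℕ) < k → D j = A₀ j)
    (C : Mx) : rowsAgree k C D ↔ rowsAgree k C A₀ :=
  ⟨fun hc j hj => (hc j hj).trans (h j hj), fun hc j hj => (hc j hj).trans (h j hj).symm⟩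

lemma rowsAgree_update_right (i : Fin m) (w : Fin n → ZMod 2) (C A₀ : Mx) :
    rowsAgree (i : ℕ) C (Function.update A₀ i w) ↔ rowsAgree (i : ℕ) C A₀ :=
  rowsAgree_congr_right (fun j hj => Function.update_of_ne (fun h => by simp [h] at hj) _ _) C

/-- Summing over the value of a given row. -/
lemma prEvt_sum_row (σ : Mx → ℝ) (i : Fin m) (R : Mx → Prop) :
    ∑ w : Fin n → ZMod 2, prEvt σ (fun C => C i = w ∧ R C) = prEvt σ R := by
  classical
  unfold prEvt
  rw [Finset.sum_comm]
  refine Finset.sum_congr rfl fun C _ => ?_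
  by_cases hR : R C
  · simp only [hR, and_true, if_true]
    rw [Finset.sum_ite_eq Finset.univ (C i) (fun _ => σ C), if_pos (Finset.mem_univ _)]
  · simp [hR]

/-- The main marginalization lemma for row-by-row product distributions. -/
lemma sum_prod_agree (f : Fin m → Mx → ℝ)
    (hdep : ∀ (i : Fin m) (A B : Mx), (∀ j : Fin m, (j : ℕ) ≤ (i : ℕ) → A j = B j) →
      f i A = f i B)
    (hnorm : ∀ (i : Fin m) (A : Mx), ∑ w : Fin n → ZMod 2, f i (Function.update A i w) = 1) :
    ∀ (d k : ℕ), k + d = m → ∀ A₀ : Mx,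
      prEvt (fun A => ∏ i, f i A) (fun A => rowsAgree k A A₀)
        = ∏ i ∈ Finset.univ.filter (fun i : Fin m => (i : ℕ) < k), f i A₀ := by
  classical
  intro d
  induction d with
  | zero =>
    intro k hk A₀
    have hkm : k = m := by omega
    rw [hkm]
    have h1 : prEvt (fun A => ∏ i, f i A) (fun A => rowsAgree m A A₀) = ∏ i, f i A₀ := by
      unfold prEvt
      have : ∀ A : Mx, (if rowsAgree m A A₀ then ∏ i, f i A else 0)
          = if A = A₀ then ∏ i, f i A else 0 := fun A => if_congr (rowsAgree_top_iff A A₀) rfl rfl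
      rw [Finset.sum_congr rfl fun A _ => this A]
      rw [Finset.sum_ite_eq' Finset.univ A₀ (fun A => ∏ i, f i A), if_pos (Finset.mem_univ _)]
    have h2 : Finset.univ.filter (fun i : Fin m => (i : ℕ) < m) = Finset.univ := by
      ext i; simp [i.isLt]
    rw [h1, h2]
  | succ d ih =>
    intro k hk A₀
    have hkm : k < m := by omega
    set K : Fin m := ⟨k, hkm⟩ with hK
    have hterm : ∀ A : Mx, (if rowsAgree k A A₀ then ∏ i, f i A else 0)
        = ∑ w : Fin n → ZMod 2,
            (if rowsAgree (k + 1) A (Function.update A₀ K w) then ∏ i, f i A else 0) := by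
      intro A
      have hiff : ∀ w, rowsAgree (k + 1) A (Function.update A₀ K w)
          ↔ (A K = w ∧ rowsAgree k A A₀) := fun w => (rowsAgree_succ_update K w A A₀).symm
      by_cases hA : rowsAgree k A A₀
      · rw [if_pos hA]
        have : ∀ w, (if rowsAgree (k + 1) A (Function.update A₀ K w) then ∏ i, f i A else 0)
            = if A K = w then ∏ i, f i A else 0 := fun w => by
          rw [if_congr (hiff w) rfl rfl]; simp [hA]
        rw [Finset.sum_congr rfl fun w _ => this w,
          Finset.sum_ite_eq Finset.univ (A K) (fun _ => ∏ i, f i A),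
          if_pos (Finset.mem_univ _)]
      · rw [if_neg hA]
        refine (Finset.sum_eq_zero fun w _ => ?_).symm
        rw [if_neg (fun h => hA ((hiff w).1 h).2)]
    unfold prEvt
    rw [Finset.sum_congr rfl fun A _ => hterm A, Finset.sum_comm]
    have hihs : ∀ w : Fin n → ZMod 2,
        (∑ A : Mx, if rowsAgree (k + 1) A (Function.update A₀ K w) then ∏ i, f i A else 0)
          = ∏ i ∈ Finset.univ.filter (fun i : Fin m => (i : ℕ) < k + 1),
              f i (Function.update A₀ K w) := by
      intro w
      have := ih (k + 1) (by omega) (Function.update A₀ K w)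
      unfold prEvt at this
      exact this
    rw [Finset.sum_congr rfl fun w _ => hihs w]
    have hfilter : Finset.univ.filter (fun i : Fin m => (i : ℕ) < k + 1)
        = insert K (Finset.univ.filter (fun i : Fin m => (i : ℕ) < k)) := by
      ext i
      simp [Nat.lt_succ_iff_lt_or_eq, Fin.ext_iff, hK, or_comm]
      omega
    have hKnot : K ∉ Finset.univ.filter (fun i : Fin m => (i : ℕ) < k) := by simp [hK]
    have hprodsmall : ∀ w, ∏ i ∈ Finset.univ.filter (fun i : Fin m => (i : ℕ) < k),
        f i (Function.update A₀ K w) = ∏ i ∈ Finset.univ.filter (fun i : Fin m => (i : ℕ) < k),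
        f i A₀ := by
      intro w
      refine Finset.prod_congr rfl fun i hi => ?_
      have hik : (i : ℕ) < k := by simpa using hi
      exact hdep i _ _ fun j hj => Function.update_of_ne
        (fun h => by rw [h] at hj; simp [hK] at hj; omega) _ _
    calc ∑ w : Fin n → ZMod 2, ∏ i ∈ Finset.univ.filter (fun i : Fin m => (i : ℕ) < k + 1),
            f i (Function.update A₀ K w)
        = ∑ w : Fin n → ZMod 2, f K (Function.update A₀ K w)
            * ∏ i ∈ Finset.univ.filter (fun i : Fin m => (i : ℕ) < k), f i A₀ := by
          refine Finset.sum_congr rfl fun w _ => ?_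
          rw [hfilter, Finset.prod_insert hKnot, hprodsmall w]
      _ = (∑ w : Fin n → ZMod 2, f K (Function.update A₀ K w))
            * ∏ i ∈ Finset.univ.filter (fun i : Fin m => (i : ℕ) < k), f i A₀ := by
          rw [Finset.sum_mul]
      _ = ∏ i ∈ Finset.univ.filter (fun i : Fin m => (i : ℕ) < k), f i A₀ := by
          rw [hnorm K A₀, one_mul]

lemma prod_div_telescope (g : ℕ → ℝ) :
    ∀ k : ℕ, (∀ i, i ≤ k → g i ≠ 0) →
      ∏ i ∈ Finset.range k, g (i + 1) / g i = g k / g 0 := by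
  intro k
  induction k with
  | zero => intro h; simp [div_self (h 0 le_rfl)]
  | succ k ih =>
    intro h
    rw [Finset.prod_range_succ, ih (fun i hi => h i (by omega))]
    have h0 : g 0 ≠ 0 := h 0 (by omega)
    have hk : g k ≠ 0 := h k (by omega)
    field_simp

lemma exists_of_prEvt_pos (σ : Mx → ℝ) {E : Mx → Prop} (h : 0 < prEvt σ E) :
    ∃ D, E D ∧ 0 < σ D := by
  classical
  by_contra hcon
  push_neg at hcon
  have hle : prEvt σ E ≤ 0 := by
    unfold prEvt
    refine Finset.sum_nonpos fun C _ => ?_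
    by_cases hC : E C
    · rw [if_pos hC]; exact hcon C hC
    · rw [if_neg hC]
  linarith

end AuxLemmas

-- ### the corrected row-by-row distribution

section RIdx
variable {m n : ℕ}

local notation "Mx" => Matrix (Fin m) (Fin n) (ZMod 2)

open Classical in
/-- The "safe" conditional row distribution: follow the conditional distribution of `σ`
whenever it is well-defined and suitably flat, and the uniform distribution otherwise. -/
noncomputable def rIdx (σ : Mx → ℝ) (S : Finset (Fin m)) (t : ℝ) (i : Fin m) (A₀ : Mx) : ℝ :=
  if 0 < prEvt σ (fun C => rowsAgree (i : ℕ) C A₀) ∧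
      (i ∈ S ∨ ∀ w : Fin n → ZMod 2,
        prEvt σ (fun C => C i = w ∧ rowsAgree (i : ℕ) C A₀)
          / prEvt σ (fun C => rowsAgree (i : ℕ) C A₀) ≤ t)
  then pIdx σ i A₀ else (2 : ℝ) ^ (-(n : ℝ))

lemma rIdx_nonneg (σ : Mx → ℝ) (hσ : ∀ A, 0 ≤ σ A) (S : Finset (Fin m)) (t : ℝ)
    (i : Fin m) (A₀ : Mx) : 0 ≤ rIdx σ S t i A₀ := by
  unfold rIdx
  split
  · exact div_nonneg (prEvt_nonneg σ hσ _) (prEvt_nonneg σ hσ _)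
  · exact le_of_lt (Real.rpow_pos_of_pos two_pos _)

lemma rIdx_dep (σ : Mx → ℝ) (S : Finset (Fin m)) (t : ℝ) (i : Fin m) (A B : Mx)
    (h : ∀ j : Fin m, (j : ℕ) ≤ (i : ℕ) → A j = B j) :
    rIdx σ S t i A = rIdx σ S t i B := by
  have hag : ∀ j : Fin m, (j : ℕ) < (i : ℕ) → A j = B j := fun j hj => h j (le_of_lt hj)
  have e1 : ∀ C : Mx, rowsAgree (i : ℕ) C A = rowsAgree (i : ℕ) C B :=
    fun C => propext (rowsAgree_congr_right hag C)
  have e2 : A i = B i := h i le_rfl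
  unfold rIdx pIdx
  simp only [e1, e2]

lemma rIdx_update_eq (σ : Mx → ℝ) (S : Finset (Fin m)) (t : ℝ) (i : Fin m) (A₀ : Mx)
    (w : Fin n → ZMod 2) :
    rIdx σ S t i (Function.update A₀ i w) =
      if 0 < prEvt σ (fun C => rowsAgree (i : ℕ) C A₀) ∧
          (i ∈ S ∨ ∀ w' : Fin n → ZMod 2,
            prEvt σ (fun C => C i = w' ∧ rowsAgree (i : ℕ) C A₀)
              / prEvt σ (fun C => rowsAgree (i : ℕ) C A₀) ≤ t)
      then prEvt σ (fun C => C i = w ∧ rowsAgree (i : ℕ) C A₀)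
          / prEvt σ (fun C => rowsAgree (i : ℕ) C A₀)
      else (2 : ℝ) ^ (-(n : ℝ)) := by
  have e1 : ∀ C : Mx, rowsAgree (i : ℕ) C (Function.update A₀ i w) = rowsAgree (i : ℕ) C A₀ :=
    fun C => propext (rowsAgree_update_right i w C A₀)
  have e2 : Function.update A₀ i w i = w := Function.update_self _ _ _
  unfold rIdx pIdx
  simp only [e1, e2]

lemma rIdx_norm (σ : Mx → ℝ) (hσ : ∀ A, 0 ≤ σ A) (S : Finset (Fin m)) (t : ℝ)
    (i : Fin m) (A : Mx) :
    ∑ w : Fin n → ZMod 2, rIdx σ S t i (Function.update A i w) = 1 := by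
  classical
  rw [Finset.sum_congr rfl fun w _ => rIdx_update_eq σ S t i A w]
  by_cases hs : 0 < prEvt σ (fun C => rowsAgree (i : ℕ) C A) ∧
      (i ∈ S ∨ ∀ w' : Fin n → ZMod 2,
        prEvt σ (fun C => C i = w' ∧ rowsAgree (i : ℕ) C A)
          / prEvt σ (fun C => rowsAgree (i : ℕ) C A) ≤ t)
  · simp only [if_pos hs]
    rw [← Finset.sum_div, prEvt_sum_row σ i _, div_self (ne_of_gt hs.1)]
  · simp only [if_neg hs]
    rw [Finset.sum_const, nsmul_eq_mul]
    have hcard : (Finset.univ : Finset (Fin n → ZMod 2)).card = 2 ^ n := by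
      rw [Finset.card_univ, Fintype.card_fun]; simp
    rw [hcard]
    push_cast
    rw [← Real.rpow_natCast 2 n, ← Real.rpow_add two_pos]
    norm_num

end RIdx

open Classical in
/-- The conditional distribution of the `μ`-random matrix given `B(A) = S₀`. -/
noncomputable def condDist {m n : ℕ} (μ : Matrix (Fin m) (Fin n) (ZMod 2) → ℝ)
    (B : Matrix (Fin m) (Fin n) (ZMod 2) → Option (Finset (Fin m)))
    (S₀ : Option (Finset (Fin m))) (A : Matrix (Fin m) (Fin n) (ZMod 2)) : ℝ :=
  (if B A = S₀ then μ A else 0) / prEvt μ (fun A' => B A' = S₀)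

/-- Conditioned on the value of the bad-set assignment, the random matrix is
`ε_bad(S₀)`-close to an `(η, n(1-η) - log₂(1/δ))`-block source, where `η = √(τ+γ)` and
`ε_bad(S₀)` is the conditional probability of being `(τ,δ)`-bad given `B(A) = S₀`. -/
theorem cond_close_to_block_source (m n : ℕ) (hm : 1 ≤ m) (hn : 1 ≤ n)
    (μ : Matrix (Fin m) (Fin n) (ZMod 2) → ℝ)
    (hμ0 : ∀ A, 0 ≤ μ A) (hμ1 : ∑ A, μ A = 1)
    (γ τ δ : ℝ) (hγ : 0 < γ) (hτ : 0 < τ) (hδ0 : 0 < δ) (hδ1 : δ ≤ 1)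
    (hη : Real.sqrt (τ + γ) ≤ 1)
    (B : Matrix (Fin m) (Fin n) (ZMod 2) → Option (Finset (Fin m)))
    (hB : IsBadSetAssignment μ τ γ B)
    (S₀ : Option (Finset (Fin m)))
    (hS₀ : 0 < prEvt μ (fun A => B A = S₀)) :
    ∃ ν : Matrix (Fin m) (Fin n) (ZMod 2) → ℝ,
      (∀ A, 0 ≤ ν A) ∧ (∑ A, ν A = 1) ∧
      IsBlockSource ν (Real.sqrt (τ + γ))
        ((n : ℝ) * (1 - Real.sqrt (τ + γ)) - Real.logb 2 (1 / δ)) ∧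
      (1 / 2) * ∑ A, |condDist μ B S₀ A - ν A|
        ≤ prEvt μ (fun A => IsTauDeltaBad μ τ δ B A ∧ B A = S₀)
            / prEvt μ (fun A => B A = S₀) := by
  classical
  set η := Real.sqrt (τ + γ) with hηdef
  have hη0 : 0 ≤ η := Real.sqrt_nonneg _
  have hδinv : (1 : ℝ) ≤ 1 / δ := by rw [le_div_iff₀ hδ0]; linarith
  have hlogδ : 0 ≤ Real.logb 2 (1 / δ) := Real.logb_nonneg one_lt_two hδinv
  set n' : ℝ := (n : ℝ) * (1 - η) - Real.logb 2 (1 / δ) with hn'def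
  set t : ℝ := (2 : ℝ) ^ (-n') with htdef
  have ht0 : 0 < t := Real.rpow_pos_of_pos two_pos _
  have hn'le : n' ≤ (n : ℝ) := by
    have h1 : (n : ℝ) * (1 - η) ≤ (n : ℝ) * 1 :=
      mul_le_mul_of_nonneg_left (by linarith) (Nat.cast_nonneg n)
    rw [hn'def]; linarith
  set σ : Matrix (Fin m) (Fin n) (ZMod 2) → ℝ := fun A => if B A = S₀ then μ A else 0
    with hσdef
  have hσ0 : ∀ A, 0 ≤ σ A := fun A => by rw [hσdef]; dsimp only; split <;> simp [hμ0 A]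
  have hσμ : ∀ A, σ A ≤ μ A := fun A => by rw [hσdef]; dsimp only; split <;> simp [hμ0 A]
  have hσpos : ∀ A, B A = S₀ → 0 < μ A → 0 < σ A := fun A h1 h2 => by
    rw [hσdef]; dsimp only; rw [if_pos h1]; exact h2
  set Z : ℝ := prEvt μ (fun A => B A = S₀) with hZdef
  have hZ0 : 0 < Z := hS₀
  have hZsum : ∑ A, σ A = Z := by
    rw [hσdef, hZdef]
    unfold prEvt
    refine Finset.sum_congr rfl fun A _ => ?_
    by_cases h : B A = S₀ <;> simp [h]
  have hcd : ∀ A, condDist μ B S₀ A = σ A / Z := by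
    intro A
    rw [hσdef, hZdef]
    unfold condDist
    congr 1
  set S : Finset (Fin m) := S₀.getD ∅ with hSdef
  -- a witness in the support with `B = S₀`
  have hexA : ∃ A₁, 0 < μ A₁ ∧ B A₁ = S₀ := by
    obtain ⟨A₁, h1, h2⟩ := exists_of_prEvt_pos μ (hZdef ▸ hZ0)
    exact ⟨A₁, h2, h1⟩
  have hScard : (S.card : ℝ) ≤ η * m := by
    obtain ⟨A₁, hμ1, hB1⟩ := hexA
    by_cases hrare : tauRare μ τ A₁
    · have hnone : S₀ = none := by rw [← hB1]; exact (hB A₁ hμ1).1 hrare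
      rw [hSdef, hnone]
      simp only [Option.getD_none, Finset.card_empty, Nat.cast_zero]
      positivity
    · obtain ⟨S', hBS', hc, _⟩ := (hB A₁ hμ1).2 hrare
      have hsome : S₀ = some S' := by rw [← hB1, hBS']
      rw [hSdef, hsome]
      simpa using hc
  -- the corrected distribution
  set ν : Matrix (Fin m) (Fin n) (ZMod 2) → ℝ := fun A₀ => ∏ i, rIdx σ S t i A₀ with hνdef
  have hν0 : ∀ A, 0 ≤ ν A := fun A => Finset.prod_nonneg fun i _ => rIdx_nonneg σ hσ0 S t i A
  have marg : ∀ k : ℕ, k ≤ m → ∀ A₀,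
      prEvt ν (fun A => rowsAgree k A A₀)
        = ∏ i ∈ Finset.univ.filter (fun i : Fin m => (i : ℕ) < k), rIdx σ S t i A₀ := by
    intro k hk A₀
    exact sum_prod_agree (rIdx σ S t) (fun i A B h => rIdx_dep σ S t i A B h)
      (fun i A => rIdx_norm σ hσ0 S t i A) (m - k) k (by omega) A₀
  have hν1 : ∑ A, ν A = 1 := by
    have h0 := marg 0 (Nat.zero_le m) (fun _ _ => 0)
    have hL : prEvt ν (fun A => rowsAgree 0 A (fun _ _ => 0)) = ∑ A, ν A := by
      unfold prEvt
      exact Finset.sum_congr rfl fun A _ => if_pos (rowsAgree_zero A _)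
    have hR : Finset.univ.filter (fun i : Fin m => (i : ℕ) < 0) = ∅ := by
      ext i; simp
    rw [hL, hR, Finset.prod_empty] at h0
    exact h0
  -- the block-source property
  have hblock : IsBlockSource ν η n' := by
    refine ⟨S, hScard, ?_⟩
    intro A₀ hνA₀ i hiS w
    rw [← htdef]
    have hnum : prEvt ν (fun C => C i = w ∧ rowsAgree (i : ℕ) C A₀)
        = (∏ j ∈ Finset.univ.filter (fun j : Fin m => (j : ℕ) < (i : ℕ)), rIdx σ S t j A₀)
            * rIdx σ S t i (Function.update A₀ i w) := by
      have e : prEvt ν (fun C => C i = w ∧ rowsAgree (i : ℕ) C A₀)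
          = prEvt ν (fun C => rowsAgree ((i : ℕ) + 1) C (Function.update A₀ i w)) :=
        prEvt_congr ν fun C => rowsAgree_succ_update i w C A₀
      rw [e, marg ((i : ℕ) + 1) i.isLt (Function.update A₀ i w)]
      have hf : Finset.univ.filter (fun j : Fin m => (j : ℕ) < (i : ℕ) + 1)
          = insert i (Finset.univ.filter (fun j : Fin m => (j : ℕ) < (i : ℕ))) := by
        ext j
        simp [Nat.lt_succ_iff_lt_or_eq, Fin.ext_iff, or_comm]
        simp only [Fin.le_iff_val_le_val, Fin.lt_iff_val_lt_val]; omega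
      rw [hf, Finset.prod_insert (by simp), mul_comm]
      congr 1
      refine Finset.prod_congr rfl fun j hj => ?_
      have hji : (j : ℕ) < (i : ℕ) := by simpa using hj
      refine rIdx_dep σ S t j _ _ fun l hl => Function.update_of_ne ?_ _ _
      intro hli
      rw [hli] at hl
      omega
    have hden : prEvt ν (fun C => rowsAgree (i : ℕ) C A₀)
        = ∏ j ∈ Finset.univ.filter (fun j : Fin m => (j : ℕ) < (i : ℕ)), rIdx σ S t j A₀ :=
      marg (i : ℕ) (le_of_lt i.isLt) A₀
    have hPne : (∏ j ∈ Finset.univ.filter (fun j : Fin m => (j : ℕ) < (i : ℕ)),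
        rIdx σ S t j A₀) ≠ 0 := by
      intro h0
      obtain ⟨j, hj, hj0⟩ := Finset.prod_eq_zero_iff.1 h0
      have : ν A₀ = 0 := by
        rw [hνdef]
        exact Finset.prod_eq_zero (Finset.mem_univ j) hj0
      rw [this] at hνA₀
      exact lt_irrefl 0 hνA₀
    rw [hnum, hden, mul_comm, mul_div_assoc, div_self hPne, mul_one]
    rw [rIdx_update_eq σ S t i A₀ w]
    split_ifs with hs
    · rcases hs.2 with hiS' | hbound
      · exact absurd hiS' hiS
      · exact hbound w
    · rw [htdef]
      exact (Real.rpow_le_rpow_left_iff (by norm_num : (1:ℝ) < 2)).2 (by linarith)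
  -- good matrices have matching probabilities
  have hgood_eq : ∀ A₀, ¬ IsTauDeltaBad μ τ δ B A₀ → B A₀ = S₀ → 0 < μ A₀ →
      condDist μ B S₀ A₀ = ν A₀ := by
    intro A₀ hgood hBA₀ hμA₀
    have hnr : ¬ tauRare μ τ A₀ := fun hr => hgood (Or.inl hr)
    have hdelta : ∀ i : Fin m, δ ≤ prEvt μ (fun C => B C = B A₀ ∧ rowsAgree (i : ℕ) C A₀)
        / prEvt μ (fun C => rowsAgree (i : ℕ) C A₀) := by
      intro i
      by_contra hlt
      exact hgood (Or.inr ⟨i, lt_of_not_ge hlt⟩)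
    obtain ⟨Sb, hBSb, _, hq⟩ := (hB A₀ hμA₀).2 hnr
    have hS₀some : S₀ = some Sb := by rw [← hBA₀, hBSb]
    have hSSb : S = Sb := by rw [hSdef, hS₀some]; rfl
    have hbpos : ∀ k : ℕ, 0 < prEvt σ (fun C => rowsAgree k C A₀) :=
      fun k => lt_of_lt_of_le (hσpos A₀ hBA₀ hμA₀)
        (single_le_prEvt σ hσ0 (fun j _ => rfl))
    have hcpos : ∀ k : ℕ, 0 < prEvt μ (fun C => rowsAgree k C A₀) :=
      fun k => lt_of_lt_of_le hμA₀ (single_le_prEvt μ hμ0 (fun j _ => rfl))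
    have hσev : ∀ i : Fin m, prEvt μ (fun C => B C = B A₀ ∧ rowsAgree (i : ℕ) C A₀)
        = prEvt σ (fun C => rowsAgree (i : ℕ) C A₀) := by
      intro i
      unfold prEvt
      refine Finset.sum_congr rfl fun C _ => ?_
      rw [hσdef, hBA₀]
      by_cases h1 : B C = S₀ <;> by_cases h2 : rowsAgree (i : ℕ) C A₀ <;> simp [h1, h2]
    have hbν : ∀ i : Fin m, δ * prEvt μ (fun C => rowsAgree (i : ℕ) C A₀)
        ≤ prEvt σ (fun C => rowsAgree (i : ℕ) C A₀) := by
      intro i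
      have h1 := (le_div_iff₀ (hcpos (i : ℕ))).1 (hdelta i)
      rwa [hσev i] at h1
    -- safety of every index
    have hsafe : ∀ i : Fin m, 0 < prEvt σ (fun C => rowsAgree (i : ℕ) C A₀) ∧
        (i ∈ S ∨ ∀ w : Fin n → ZMod 2,
          prEvt σ (fun C => C i = w ∧ rowsAgree (i : ℕ) C A₀)
            / prEvt σ (fun C => rowsAgree (i : ℕ) C A₀) ≤ t) := by
      intro i
      refine ⟨hbpos (i : ℕ), ?_⟩
      by_cases hiS : i ∈ S
      · exact Or.inl hiS
      · refine Or.inr fun w => ?_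
        rcases (prEvt_nonneg σ hσ0 (fun C => C i = w ∧ rowsAgree (i : ℕ) C A₀)).lt_or_eq
          with hpos | h0
        swap
        · rw [← h0, zero_div]; exact le_of_lt ht0
        -- a witness D in the support
        obtain ⟨D, hDcond, hD⟩ := exists_of_prEvt_pos σ hpos
        have hBD : B D = S₀ ∧ 0 < μ D := by
          revert hD
          rw [hσdef]; dsimp only
          by_cases h1 : B D = S₀
          · intro h; exact ⟨h1, by rwa [if_pos h1] at h⟩
          · rw [if_neg h1]; intro h; exact absurd h (lt_irrefl 0)
        have hnrD : ¬ tauRare μ τ D := by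
          intro hr
          have := (hB D hBD.2).1 hr
          rw [this, hS₀some] at hBD
          exact absurd hBD.1 (by simp)
        obtain ⟨SD, hBSD, _, hqD⟩ := (hB D hBD.2).2 hnrD
        have hSDSb : SD = Sb := by
          have : some SD = some Sb := by rw [← hBSD, hBD.1, hS₀some]
          exact Option.some.inj this
        have hqiD : (1 - η) * (n : ℝ) ≤ qIdx μ i D := by
          refine hqD i ?_
          rw [hSDSb, ← hSSb]
          exact hiS
        have hpiD : pIdx μ i D ≤ (2 : ℝ) ^ (-((1 - η) * (n : ℝ))) := by
          have hp0 : 0 ≤ pIdx μ i D :=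
            div_nonneg (prEvt_nonneg μ hμ0 _) (prEvt_nonneg μ hμ0 _)
          rcases hp0.lt_or_eq with hp | hp
          · have hlogb : Real.logb 2 (pIdx μ i D) ≤ -((1 - η) * (n : ℝ)) := by
              unfold qIdx at hqiD; linarith
            exact (Real.logb_le_iff_le_rpow one_lt_two hp).1 hlogb
          · rw [← hp]; exact le_of_lt (Real.rpow_pos_of_pos two_pos _)
        have hpeq : pIdx μ i D = prEvt μ (fun C => C i = w ∧ rowsAgree (i : ℕ) C A₀)
            / prEvt μ (fun C => rowsAgree (i : ℕ) C A₀) := by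
          unfold pIdx
          have e1 : ∀ C, (C i = D i ∧ rowsAgree (i : ℕ) C D)
              ↔ (C i = w ∧ rowsAgree (i : ℕ) C A₀) := fun C =>
            and_congr (by rw [hDcond.1]) (rowsAgree_congr_right hDcond.2 C)
          have e2 : ∀ C : Matrix (Fin m) (Fin n) (ZMod 2),
              rowsAgree (i : ℕ) C D ↔ rowsAgree (i : ℕ) C A₀ :=
            rowsAgree_congr_right hDcond.2
          rw [prEvt_congr μ e1, prEvt_congr μ e2]
        have hNle : prEvt σ (fun C => C i = w ∧ rowsAgree (i : ℕ) C A₀)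
            ≤ prEvt μ (fun C => C i = w ∧ rowsAgree (i : ℕ) C A₀) :=
          prEvt_le_prEvt σ μ hσμ hμ0 _
        have hδc : 0 < δ * prEvt μ (fun C => rowsAgree (i : ℕ) C A₀) :=
          mul_pos hδ0 (hcpos (i : ℕ))
        have htval : t = (2 : ℝ) ^ (-((1 - η) * (n : ℝ))) / δ := by
          rw [htdef, hn'def,
            show -((n : ℝ) * (1 - η) - Real.logb 2 (1 / δ))
              = (-((1 - η) * (n : ℝ))) + Real.logb 2 (1 / δ) by ring,
            Real.rpow_add two_pos,
            Real.rpow_logb two_pos (by norm_num) (by positivity), mul_one_div]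
        calc prEvt σ (fun C => C i = w ∧ rowsAgree (i : ℕ) C A₀)
              / prEvt σ (fun C => rowsAgree (i : ℕ) C A₀)
            ≤ prEvt μ (fun C => C i = w ∧ rowsAgree (i : ℕ) C A₀)
                / (δ * prEvt μ (fun C => rowsAgree (i : ℕ) C A₀)) :=
              div_le_div₀ (prEvt_nonneg μ hμ0 _) hNle hδc (hbν i)
          _ = pIdx μ i D / δ := by rw [hpeq, div_div, mul_comm]
          _ ≤ (2 : ℝ) ^ (-((1 - η) * (n : ℝ))) / δ := (div_le_div_iff_of_pos_right hδ0).2 hpiD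
          _ = t := htval.symm
    -- the chain rule
    have hcond : condDist μ B S₀ A₀ = σ A₀ / Z := hcd A₀
    have hgne : ∀ k : ℕ, prEvt σ (fun C => rowsAgree k C A₀) ≠ 0 :=
      fun k => ne_of_gt (hbpos k)
    have htel : ∏ j ∈ Finset.range m,
        prEvt σ (fun C => rowsAgree (j + 1) C A₀) / prEvt σ (fun C => rowsAgree j C A₀)
          = prEvt σ (fun C => rowsAgree m C A₀) / prEvt σ (fun C => rowsAgree 0 C A₀) :=
      prod_div_telescope (fun k => prEvt σ (fun C => rowsAgree k C A₀)) m
        (fun j _ => hgne j)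
    have hgm : prEvt σ (fun C => rowsAgree m C A₀) = σ A₀ := by
      unfold prEvt
      rw [Finset.sum_congr rfl fun C _ => if_congr (rowsAgree_top_iff C A₀) rfl rfl,
        Finset.sum_ite_eq' Finset.univ A₀ σ, if_pos (Finset.mem_univ _)]
    have hg0 : prEvt σ (fun C => rowsAgree 0 C A₀) = Z := by
      unfold prEvt
      rw [Finset.sum_congr rfl fun C _ => if_pos (rowsAgree_zero C A₀)]
      exact hZsum
    have hν_eq : ν A₀ = ∏ i : Fin m,
        prEvt σ (fun C => rowsAgree ((i : ℕ) + 1) C A₀)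
          / prEvt σ (fun C => rowsAgree (i : ℕ) C A₀) := by
      rw [hνdef]
      refine Finset.prod_congr rfl fun i _ => ?_
      unfold rIdx
      rw [if_pos (hsafe i)]
      unfold pIdx
      rw [prEvt_congr σ fun C => rowsAgree_succ i C A₀]
    rw [hcond, hν_eq,
      Fin.prod_univ_eq_prod_range
        (fun k => prEvt σ (fun C => rowsAgree (k + 1) C A₀)
          / prEvt σ (fun C => rowsAgree k C A₀)) m,
      htel, hgm, hg0]
  -- conclusion
  refine ⟨ν, hν0, hν1, hblock, ?_⟩
  have hp0 : ∀ A, 0 ≤ condDist μ B S₀ A := by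
    intro A
    rw [hcd A]
    exact div_nonneg (hσ0 A) (le_of_lt hZ0)
  have hp1 : ∑ A, condDist μ B S₀ A = 1 := by
    rw [Finset.sum_congr rfl fun A _ => hcd A, ← Finset.sum_div, hZsum,
      div_self (ne_of_gt hZ0)]
  have habs : ∀ x : ℝ, |x| = 2 * max x 0 - x := by
    intro x
    rcases le_total x 0 with h | h
    · rw [abs_of_nonpos h, max_eq_right h]; ring
    · rw [abs_of_nonneg h, max_eq_left h]; ring
  have hsum : ∑ A, |condDist μ B S₀ A - ν A|
      = 2 * ∑ A, max (condDist μ B S₀ A - ν A) 0 := by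
    rw [Finset.sum_congr rfl fun A _ => habs _]
    rw [Finset.sum_sub_distrib, Finset.sum_sub_distrib, hp1, hν1, ← Finset.mul_sum]
    ring
  set badE : Matrix (Fin m) (Fin n) (ZMod 2) → ℝ :=
    fun A => if (IsTauDeltaBad μ τ δ B A ∧ B A = S₀) then μ A else 0 with hbadEdef
  have hmaxle : ∀ A, max (condDist μ B S₀ A - ν A) 0 ≤ badE A / Z := by
    intro A
    rw [hbadEdef]
    dsimp only
    by_cases hbadE : IsTauDeltaBad μ τ δ B A ∧ B A = S₀
    · rw [if_pos hbadE]
      apply max_le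
      · have h1 : condDist μ B S₀ A = μ A / Z := by
          rw [hcd A, hσdef]
          dsimp only
          rw [if_pos hbadE.2]
        have h2 := hν0 A
        have h3 : condDist μ B S₀ A ≤ μ A / Z := le_of_eq h1
        linarith
      · exact div_nonneg (hμ0 A) (le_of_lt hZ0)
    · rw [if_neg hbadE, zero_div]
      have hple : condDist μ B S₀ A ≤ ν A := by
        by_cases hBA : B A = S₀
        · by_cases hbad : IsTauDeltaBad μ τ δ B A
          · exact absurd ⟨hbad, hBA⟩ hbadE
          · rcases (hμ0 A).lt_or_eq with hμpos | h0
            · rw [hgood_eq A hbad hBA hμpos]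
            · have hz : condDist μ B S₀ A = 0 := by
                rw [hcd A, hσdef]
                dsimp only
                rw [if_pos hBA, ← h0, zero_div]
              rw [hz]; exact hν0 A
        · have hz : condDist μ B S₀ A = 0 := by
            rw [hcd A, hσdef]
            dsimp only
            rw [if_neg hBA, zero_div]
          rw [hz]; exact hν0 A
      exact max_le (by linarith) le_rfl
  calc (1 / 2) * ∑ A, |condDist μ B S₀ A - ν A|
      = ∑ A, max (condDist μ B S₀ A - ν A) 0 := by rw [hsum]; ring
    _ ≤ ∑ A, badE A / Z := Finset.sum_le_sum fun A _ => hmaxle A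
    _ = prEvt μ (fun A => IsTauDeltaBad μ τ δ B A ∧ B A = S₀) / Z := by
        rw [← Finset.sum_div]
        congr 1
        unfold prEvt
        refine Finset.sum_congr rfl fun A _ => ?_
        rw [hbadEdef]
        by_cases h : IsTauDeltaBad μ τ δ B A ∧ B A = S₀ <;> simp [h]
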